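/- Nonemptiness of outcomes is undecidable: there exists a fixed procedure P with no preconditions and only tgd postconditions such that it is undecidable, given a finite instance I, whether outcomes_P(I) is nonempty. -/

import Mathlib

/-- Domain of values. -/
abbrev Val := ℕ
/-- Variables. -/
abbrev Var := ℕ
/-- Relation names. -/
abbrev RelName := ℕ
/-- A relational instance assigns a set of tuples to each relation name. -/
abbrev Instance := RelName → Set (List Val)

/-- Instance extension (inclusion). -/
def Instance.le (I J : Instance) : Prop := ∀ R, I R ⊆ J R

/-- A relational atom `R(x₁,…,xₖ)`. -/
structure Atom where
  rel : RelName
  args : List Var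

/-- Satisfaction of an atom under an assignment. -/
def holdsAtom (I : Instance) (ν : Var → Val) (a : Atom) : Prop :=
  a.args.map ν ∈ I a.rel

/-- A tuple-generating dependency, given by its body and head conjunctions. -/
structure TGD where
  body : List Atom
  head : List Atom

/-- Variables occurring in the body of a tgd. -/
def TGD.bodyVar (t : TGD) (v : Var) : Prop := ∃ a ∈ t.body, v ∈ a.args

/-- Satisfaction of a tgd: every assignment satisfying the body extends to one
satisfying the head. -/
def satTGD (I : Instance) (t : TGD) : Prop :=
  ∀ ν : Var → Val, (∀ a ∈ t.body, holdsAtom I ν a) →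
    ∃ ν' : Var → Val, (∀ v, t.bodyVar v → ν' v = ν v) ∧ ∀ a ∈ t.head, holdsAtom I ν' a

/-- A full tgd has no existential variables in its head. -/
def FullTGD (t : TGD) : Prop := ∀ a ∈ t.head, ∀ v ∈ a.args, t.bodyVar v

/-- A set of tgds is acyclic: the relation-dependency graph (edge from a body
relation to a head relation) has no cycle, witnessed by a rank function. -/
def AcyclicTGDs (ts : List TGD) : Prop :=
  ∃ rank : RelName → ℕ, ∀ t ∈ ts, ∀ a ∈ t.body, ∀ b ∈ t.head, rank a.rel < rank b.rel

/-- Finiteness of an instance (finitely many facts overall). -/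
def FiniteInst (I : Instance) : Prop := {p : RelName × List Val | p.2 ∈ I p.1}.Finite

/-- Relations appearing in heads of a set of tgds (the scope of a safe-scope procedure). -/
def headRels (ts : List TGD) : Set RelName := { R | ∃ t ∈ ts, ∃ b ∈ t.head, b.rel = R }

/-- Outcomes of applying a procedure with safe scope (identified with its set of
postcondition tgds): extensions of `I` satisfying the tgds, where all relations
outside the scope (the head relations) are unchanged. -/
def safeOutcomes (ts : List TGD) (I : Instance) : Set Instance :=
  { J | Instance.le I J ∧ (∀ t ∈ ts, satTGD J t) ∧ ∀ R, R ∉ headRels ts → I R = J R }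

/-- Outcomes of a sequence of procedures with safe scope. -/
def safeSeqOutcomes : List (List TGD) → Instance → Set Instance
  | [], I => {I}
  | Γ :: rest, I => ⋃ J ∈ safeOutcomes Γ I, safeSeqOutcomes rest J

/-- A boolean conjunctive query: a conjunction of atoms, all variables existential. -/
abbrev BCQ := List Atom

/-- Satisfaction of a boolean conjunctive query. -/
def holdsBCQ (I : Instance) (q : BCQ) : Prop :=
  ∃ ν : Var → Val, ∀ a ∈ q, holdsAtom I ν a

/-- The set of instances represented by a scoped knowledge base `(I, Γ, Scope)`. -/
def repSKB (I : Instance) (Γ : List TGD) (Scope : Set RelName) : Set Instance :=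
  { J | Instance.le I J ∧ (∀ t ∈ Γ, satTGD J t) ∧ ∀ R, R ∉ Scope → I R = J R }

/-- Minimal members of a set of instances. -/
def MinimalIn (S : Set Instance) (J : Instance) : Prop :=
  J ∈ S ∧ ∀ K ∈ S, Instance.le K J → K = J

/-- The set of facts of an instance. -/
def tupleSet (I : Instance) : Set (RelName × List Val) := {p | p.2 ∈ I p.1}

/-- Encoding of finite instances as lists of facts (for computability). -/
abbrev FinInst := List (RelName × List Val)

/-- The instance encoded by a list of facts. -/
def toInstance (L : FinInst) : Instance := fun R => { t | (R, t) ∈ L }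

/-- A conjunctive query with free variables. -/
structure CQuery where
  free : List Var
  body : List Atom

/-- Answers of a conjunctive query over an instance. -/
def answers (q : CQuery) (I : Instance) : Set (List Val) :=
  { l | ∃ ν : Var → Val, (∀ a ∈ q.body, holdsAtom I ν a) ∧ l = q.free.map ν }

/-- A procedure whose pre- and postconditions are tgds, with a scope and
preservation queries. -/
structure Proc where
  scope : Set RelName
  pre : List TGD
  post : List TGD
  pres : List CQuery

/-- Possible outcomes of applying a procedure: the preconditions hold on `I`,
the postconditions hold on the outcome, out-of-scope relations are unchanged
and answers to the preservation queries are preserved. -/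
def procOutcomes (P : Proc) (I : Instance) : Set Instance :=
  { J | (∀ t ∈ P.pre, satTGD I t) ∧ (∀ t ∈ P.post, satTGD J t) ∧
        (∀ R, R ∉ P.scope → I R = J R) ∧ ∀ q ∈ P.pres, answers q I ⊆ answers q J }

namespace Undec
open Turing.ToPartrec

/-! ### Relation names -/
def rZ : RelName := 0
def rS : RelName := 1
def rNum : RelName := 2
def rNil : RelName := 3
def rList : RelName := 4
def rCons : RelName := 5
def rEval : RelName := 6
def rBad : RelName := 7
def rRoot : RelName := 8
def rInput : RelName := 9
def rZero' : RelName := 10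
def rSucc : RelName := 11
def rTail : RelName := 12
def rConsC : RelName := 13
def rComp : RelName := 14
def rCase : RelName := 15
def rFix : RelName := 16

/-! ### Encodings of codes, numbers and lists as values -/

def encCode : Code → ℕ
  | .zero' => 0
  | .succ => 1
  | .tail => 2
  | .cons f g => (Nat.pair (encCode f) (encCode g)) * 8 + 3
  | .comp f g => (Nat.pair (encCode f) (encCode g)) * 8 + 4
  | .case f g => (Nat.pair (encCode f) (encCode g)) * 8 + 5
  | .fix f => encCode f * 8 + 6

lemma encCode_inj : ∀ c d : Code, encCode c = encCode d → c = d := by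
  intro c
  induction c with
  | zero' => intro d h; cases d <;> simp [encCode] at h ⊢
  | succ => intro d h; cases d <;> simp [encCode] at h ⊢
  | tail => intro d h; cases d <;> simp [encCode] at h ⊢
  | cons f g ihf ihg =>
    intro d h; cases d <;> simp [encCode] at h ⊢ <;> try omega
    case cons f' g' => exact ⟨ihf _ h.1, ihg _ h.2⟩
  | comp f g ihf ihg =>
    intro d h; cases d <;> simp [encCode] at h ⊢ <;> try omega
    case comp f' g' => exact ⟨ihf _ h.1, ihg _ h.2⟩
  | case f g ihf ihg =>
    intro d h; cases d <;> simp [encCode] at h ⊢ <;> try omega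
    case case f' g' => exact ⟨ihf _ h.1, ihg _ h.2⟩
  | fix f ihf =>
    intro d h; cases d <;> simp [encCode] at h ⊢ <;> try omega
    case fix f' => exact ihf _ h

def nV (k : ℕ) : Val := 4 * k
def lV (v : List ℕ) : Val := 4 * Encodable.encode v + 2
def cV (c : Code) : Val := 2 * encCode c + 1

lemma nV_inj {a b : ℕ} (h : nV a = nV b) : a = b := by
  have h' : 4 * a = 4 * b := h; omega
lemma lV_inj {a b : List ℕ} (h : lV a = lV b) : a = b := by
  have h' : 4 * Encodable.encode a + 2 = 4 * Encodable.encode b + 2 := h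
  exact Encodable.encode_injective (by omega)
lemma cV_inj {a b : Code} (h : cV a = cV b) : a = b := by
  have h' : 2 * encCode a + 1 = 2 * encCode b + 1 := h
  exact encCode_inj _ _ (by omega)

/-! ### The tgds of the interpreter -/

def A (r : RelName) (xs : List Var) : Atom := ⟨r, xs⟩

def g1 : TGD := ⟨[A rNum [0]], [A rS [0,1], A rNum [1]]⟩
def g2 : TGD := ⟨[A rList [0], A rNum [1]], [A rCons [2,1,0], A rList [2]]⟩
def z1 : TGD := ⟨[A rZero' [0], A rCons [3,2,1], A rZ [2]], [A rEval [0,1,3]]⟩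
def s1 : TGD := ⟨[A rSucc [0], A rCons [1,2,3], A rS [2,4], A rNil [5], A rCons [6,4,5]],
                 [A rEval [0,1,6]]⟩
def s2 : TGD := ⟨[A rSucc [0], A rNil [1], A rZ [2], A rS [2,4], A rNil [5], A rCons [6,4,5]],
                 [A rEval [0,1,6]]⟩
def t1 : TGD := ⟨[A rTail [0], A rCons [1,2,3]], [A rEval [0,1,3]]⟩
def t2 : TGD := ⟨[A rTail [0], A rNil [1]], [A rEval [0,1,1]]⟩
def cn1 : TGD := ⟨[A rConsC [0,1,2], A rEval [1,3,4], A rCons [4,5,6], A rEval [2,3,7],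
                   A rCons [8,5,7]], [A rEval [0,3,8]]⟩
def cn2 : TGD := ⟨[A rConsC [0,1,2], A rEval [1,3,4], A rNil [4], A rZ [5], A rEval [2,3,7],
                   A rCons [8,5,7]], [A rEval [0,3,8]]⟩
def cp1 : TGD := ⟨[A rComp [0,1,2], A rEval [2,3,4], A rEval [1,4,5]], [A rEval [0,3,5]]⟩
def ca1 : TGD := ⟨[A rCase [0,1,2], A rNil [3], A rEval [1,3,4]], [A rEval [0,3,4]]⟩
def ca2 : TGD := ⟨[A rCase [0,1,2], A rCons [3,4,5], A rZ [4], A rEval [1,5,6]], [A rEval [0,3,6]]⟩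
def ca3 : TGD := ⟨[A rCase [0,1,2], A rCons [3,4,5], A rS [6,4], A rCons [7,6,5], A rEval [2,7,8]],
                  [A rEval [0,3,8]]⟩
def f1 : TGD := ⟨[A rFix [0,1], A rEval [1,2,3], A rNil [3]], [A rEval [0,2,3]]⟩
def f2 : TGD := ⟨[A rFix [0,1], A rEval [1,2,3], A rCons [3,4,5], A rZ [4]], [A rEval [0,2,5]]⟩
def f3 : TGD := ⟨[A rFix [0,1], A rEval [1,2,3], A rCons [3,4,5], A rS [6,4], A rEval [0,5,7]],
                 [A rEval [0,2,7]]⟩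
def b1 : TGD := ⟨[A rRoot [0], A rInput [1], A rEval [0,1,2]], [A rBad []]⟩

def rules : List TGD := [g1,g2,z1,s1,s2,t1,t2,cn1,cn2,cp1,ca1,ca2,ca3,f1,f2,f3,b1]

end Undec

namespace Undec
variable {J : Instance}

lemma fire_full {t : TGD} (ht : satTGD J t) (hfull : FullTGD t)
    {ν : Var → Val} (hb : ∀ a ∈ t.body, holdsAtom J ν a) : ∀ a ∈ t.head, holdsAtom J ν a := by
  obtain ⟨ν', hag, hh⟩ := ht ν hb
  intro a ha
  have h2 := hh a ha
  unfold holdsAtom at h2 ⊢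
  rwa [List.map_congr_left (fun v hv => hag v (hfull a ha v hv))] at h2

lemma fire_z1 (h : satTGD J z1) {c l z o : Val}
    (h1 : [c] ∈ J rZero') (h2 : [o,z,l] ∈ J rCons) (h3 : [z] ∈ J rZ) :
    [c,l,o] ∈ J rEval := by
  have := fire_full h (by unfold FullTGD TGD.bodyVar; decide)
    (ν := fun i => [c,l,z,o].getD i 0) ?_ (A rEval [0,1,3]) (by simp [z1])
  · simpa [holdsAtom, A] using this
  · intro a ha
    simp [z1, A] at ha
    rcases ha with h'|h'|h' <;> subst h' <;> simp [holdsAtom, A] <;> assumption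

lemma fire_s1 (h : satTGD J s1) {c l x t x' n0 o : Val}
    (h1 : [c] ∈ J rSucc) (h2 : [l,x,t] ∈ J rCons) (h3 : [x,x'] ∈ J rS) (h4 : [n0] ∈ J rNil) (h5 : [o,x',n0] ∈ J rCons) :
    [c,l,o] ∈ J rEval := by
  have := fire_full h (by unfold FullTGD TGD.bodyVar; decide)
    (ν := fun i => [c,l,x,t,x',n0,o].getD i 0) ?_ (A rEval [0,1,6]) (by simp [s1])
  · simpa [holdsAtom, A] using this
  · intro a ha
    simp [s1, A] at ha
    rcases ha with h'|h'|h'|h'|h' <;> subst h' <;> simp [holdsAtom, A] <;> assumption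

lemma fire_s2 (h : satTGD J s2) {c l z z' n0 o : Val}
    (h1 : [c] ∈ J rSucc) (h2 : [l] ∈ J rNil) (h3 : [z] ∈ J rZ) (h4 : [z,z'] ∈ J rS) (h5 : [n0] ∈ J rNil) (h6 : [o,z',n0] ∈ J rCons) :
    [c,l,o] ∈ J rEval := by
  have := fire_full h (by unfold FullTGD TGD.bodyVar; decide)
    (ν := fun i => [c,l,z,0,z',n0,o].getD i 0) ?_ (A rEval [0,1,6]) (by simp [s2])
  · simpa [holdsAtom, A] using this
  · intro a ha
    simp [s2, A] at ha
    rcases ha with h'|h'|h'|h'|h'|h' <;> subst h' <;> simp [holdsAtom, A] <;> assumption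

lemma fire_t1 (h : satTGD J t1) {c l x t : Val}
    (h1 : [c] ∈ J rTail) (h2 : [l,x,t] ∈ J rCons) :
    [c,l,t] ∈ J rEval := by
  have := fire_full h (by unfold FullTGD TGD.bodyVar; decide)
    (ν := fun i => [c,l,x,t].getD i 0) ?_ (A rEval [0,1,3]) (by simp [t1])
  · simpa [holdsAtom, A] using this
  · intro a ha
    simp [t1, A] at ha
    rcases ha with h'|h' <;> subst h' <;> simp [holdsAtom, A] <;> assumption

lemma fire_t2 (h : satTGD J t2) {c l : Val}
    (h1 : [c] ∈ J rTail) (h2 : [l] ∈ J rNil) :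
    [c,l,l] ∈ J rEval := by
  have := fire_full h (by unfold FullTGD TGD.bodyVar; decide)
    (ν := fun i => [c,l].getD i 0) ?_ (A rEval [0,1,1]) (by simp [t2])
  · simpa [holdsAtom, A] using this
  · intro a ha
    simp [t2, A] at ha
    rcases ha with h'|h' <;> subst h' <;> simp [holdsAtom, A] <;> assumption

lemma fire_cn1 (h : satTGD J cn1) {c f g l m x mt o2 o : Val}
    (h1 : [c,f,g] ∈ J rConsC) (h2 : [f,l,m] ∈ J rEval) (h3 : [m,x,mt] ∈ J rCons) (h4 : [g,l,o2] ∈ J rEval) (h5 : [o,x,o2] ∈ J rCons) :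
    [c,l,o] ∈ J rEval := by
  have := fire_full h (by unfold FullTGD TGD.bodyVar; decide)
    (ν := fun i => [c,f,g,l,m,x,mt,o2,o].getD i 0) ?_ (A rEval [0,3,8]) (by simp [cn1])
  · simpa [holdsAtom, A] using this
  · intro a ha
    simp [cn1, A] at ha
    rcases ha with h'|h'|h'|h'|h' <;> subst h' <;> simp [holdsAtom, A] <;> assumption

lemma fire_cn2 (h : satTGD J cn2) {c f g l m z o2 o : Val}
    (h1 : [c,f,g] ∈ J rConsC) (h2 : [f,l,m] ∈ J rEval) (h3 : [m] ∈ J rNil) (h4 : [z] ∈ J rZ) (h5 : [g,l,o2] ∈ J rEval) (h6 : [o,z,o2] ∈ J rCons) :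
    [c,l,o] ∈ J rEval := by
  have := fire_full h (by unfold FullTGD TGD.bodyVar; decide)
    (ν := fun i => [c,f,g,l,m,z,0,o2,o].getD i 0) ?_ (A rEval [0,3,8]) (by simp [cn2])
  · simpa [holdsAtom, A] using this
  · intro a ha
    simp [cn2, A] at ha
    rcases ha with h'|h'|h'|h'|h'|h' <;> subst h' <;> simp [holdsAtom, A] <;> assumption

lemma fire_cp1 (h : satTGD J cp1) {c f g l m o : Val}
    (h1 : [c,f,g] ∈ J rComp) (h2 : [g,l,m] ∈ J rEval) (h3 : [f,m,o] ∈ J rEval) :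
    [c,l,o] ∈ J rEval := by
  have := fire_full h (by unfold FullTGD TGD.bodyVar; decide)
    (ν := fun i => [c,f,g,l,m,o].getD i 0) ?_ (A rEval [0,3,5]) (by simp [cp1])
  · simpa [holdsAtom, A] using this
  · intro a ha
    simp [cp1, A] at ha
    rcases ha with h'|h'|h' <;> subst h' <;> simp [holdsAtom, A] <;> assumption

lemma fire_ca1 (h : satTGD J ca1) {c f g l o : Val}
    (h1 : [c,f,g] ∈ J rCase) (h2 : [l] ∈ J rNil) (h3 : [f,l,o] ∈ J rEval) :
    [c,l,o] ∈ J rEval := by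
  have := fire_full h (by unfold FullTGD TGD.bodyVar; decide)
    (ν := fun i => [c,f,g,l,o].getD i 0) ?_ (A rEval [0,3,4]) (by simp [ca1])
  · simpa [holdsAtom, A] using this
  · intro a ha
    simp [ca1, A] at ha
    rcases ha with h'|h'|h' <;> subst h' <;> simp [holdsAtom, A] <;> assumption

lemma fire_ca2 (h : satTGD J ca2) {c f g l z t o : Val}
    (h1 : [c,f,g] ∈ J rCase) (h2 : [l,z,t] ∈ J rCons) (h3 : [z] ∈ J rZ) (h4 : [f,t,o] ∈ J rEval) :
    [c,l,o] ∈ J rEval := by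
  have := fire_full h (by unfold FullTGD TGD.bodyVar; decide)
    (ν := fun i => [c,f,g,l,z,t,o].getD i 0) ?_ (A rEval [0,3,6]) (by simp [ca2])
  · simpa [holdsAtom, A] using this
  · intro a ha
    simp [ca2, A] at ha
    rcases ha with h'|h'|h'|h' <;> subst h' <;> simp [holdsAtom, A] <;> assumption

lemma fire_ca3 (h : satTGD J ca3) {c f g l x' t x m o : Val}
    (h1 : [c,f,g] ∈ J rCase) (h2 : [l,x',t] ∈ J rCons) (h3 : [x,x'] ∈ J rS) (h4 : [m,x,t] ∈ J rCons) (h5 : [g,m,o] ∈ J rEval) :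
    [c,l,o] ∈ J rEval := by
  have := fire_full h (by unfold FullTGD TGD.bodyVar; decide)
    (ν := fun i => [c,f,g,l,x',t,x,m,o].getD i 0) ?_ (A rEval [0,3,8]) (by simp [ca3])
  · simpa [holdsAtom, A] using this
  · intro a ha
    simp [ca3, A] at ha
    rcases ha with h'|h'|h'|h'|h' <;> subst h' <;> simp [holdsAtom, A] <;> assumption

lemma fire_f1 (h : satTGD J f1) {c f l m : Val}
    (h1 : [c,f] ∈ J rFix) (h2 : [f,l,m] ∈ J rEval) (h3 : [m] ∈ J rNil) :
    [c,l,m] ∈ J rEval := by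
  have := fire_full h (by unfold FullTGD TGD.bodyVar; decide)
    (ν := fun i => [c,f,l,m].getD i 0) ?_ (A rEval [0,2,3]) (by simp [f1])
  · simpa [holdsAtom, A] using this
  · intro a ha
    simp [f1, A] at ha
    rcases ha with h'|h'|h' <;> subst h' <;> simp [holdsAtom, A] <;> assumption

lemma fire_f2 (h : satTGD J f2) {c f l m z t : Val}
    (h1 : [c,f] ∈ J rFix) (h2 : [f,l,m] ∈ J rEval) (h3 : [m,z,t] ∈ J rCons) (h4 : [z] ∈ J rZ) :
    [c,l,t] ∈ J rEval := by
  have := fire_full h (by unfold FullTGD TGD.bodyVar; decide)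
    (ν := fun i => [c,f,l,m,z,t].getD i 0) ?_ (A rEval [0,2,5]) (by simp [f2])
  · simpa [holdsAtom, A] using this
  · intro a ha
    simp [f2, A] at ha
    rcases ha with h'|h'|h'|h' <;> subst h' <;> simp [holdsAtom, A] <;> assumption

lemma fire_f3 (h : satTGD J f3) {c f l m x' t x o : Val}
    (h1 : [c,f] ∈ J rFix) (h2 : [f,l,m] ∈ J rEval) (h3 : [m,x',t] ∈ J rCons) (h4 : [x,x'] ∈ J rS) (h5 : [c,t,o] ∈ J rEval) :
    [c,l,o] ∈ J rEval := by
  have := fire_full h (by unfold FullTGD TGD.bodyVar; decide)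
    (ν := fun i => [c,f,l,m,x',t,x,o].getD i 0) ?_ (A rEval [0,2,7]) (by simp [f3])
  · simpa [holdsAtom, A] using this
  · intro a ha
    simp [f3, A] at ha
    rcases ha with h'|h'|h'|h'|h' <;> subst h' <;> simp [holdsAtom, A] <;> assumption

lemma fire_b1 (h : satTGD J b1) {c l o : Val}
    (h1 : [c] ∈ J rRoot) (h2 : [l] ∈ J rInput) (h3 : [c,l,o] ∈ J rEval) :
    [] ∈ J rBad := by
  have := fire_full h (by unfold FullTGD TGD.bodyVar; decide)
    (ν := fun i => [c,l,o].getD i 0) ?_ (A rBad []) (by simp [b1])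
  · simpa [holdsAtom, A] using this
  · intro a ha
    simp [b1, A] at ha
    rcases ha with h'|h'|h' <;> subst h' <;> simp [holdsAtom, A] <;> assumption

end Undec

namespace Undec
open Turing.ToPartrec
variable {J : Instance}

lemma step_g1 (h : satTGD J g1) {x : Val} (hx : [x] ∈ J rNum) :
    ∃ y, [x,y] ∈ J rS ∧ [y] ∈ J rNum := by
  have hb : ∀ a ∈ g1.body, holdsAtom J (fun _ => x) a := by
    intro a ha; simp [g1, A] at ha; subst ha; simpa [holdsAtom, A] using hx
  obtain ⟨ν', hag, hh⟩ := h _ hb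
  · have h0 : ν' 0 = x := hag 0 ⟨A rNum [0], by simp [g1], by simp [A]⟩
    refine ⟨ν' 1, ?_, ?_⟩
    · have := hh (A rS [0,1]) (by simp [g1]); simpa [holdsAtom, A, h0] using this
    · have := hh (A rNum [1]) (by simp [g1]); simpa [holdsAtom, A] using this

lemma step_g2 (h : satTGD J g2) {l x : Val} (hl : [l] ∈ J rList) (hx : [x] ∈ J rNum) :
    ∃ m, [m,x,l] ∈ J rCons ∧ [m] ∈ J rList := by
  have hb : ∀ a ∈ g2.body, holdsAtom J (fun i => [l,x].getD i 0) a := by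
    intro a ha; simp [g2, A] at ha
    rcases ha with h'|h' <;> subst h' <;> simp [holdsAtom, A] <;> assumption
  obtain ⟨ν', hag, hh⟩ := h _ hb
  · have h0 : ν' 0 = l := hag 0 ⟨A rList [0], by simp [g2], by simp [A]⟩
    have h1 : ν' 1 = x := hag 1 ⟨A rNum [1], by simp [g2], by simp [A]⟩
    refine ⟨ν' 2, ?_, ?_⟩
    · have := hh (A rCons [2,1,0]) (by simp [g2]); simpa [holdsAtom, A, h0, h1] using this
    · have := hh (A rList [2]) (by simp [g2]); simpa [holdsAtom, A] using this

/-! ### Representation predicates -/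

def RepN (J : Instance) : Val → ℕ → Prop
  | x, 0 => [x] ∈ J rZ ∧ [x] ∈ J rNum
  | x, k+1 => [x] ∈ J rNum ∧ ∃ y, RepN J y k ∧ [y,x] ∈ J rS

def RepL (J : Instance) : Val → List ℕ → Prop
  | l, [] => [l] ∈ J rNil ∧ [l] ∈ J rList
  | l, a :: v => [l] ∈ J rList ∧ ∃ x t, RepN J x a ∧ RepL J t v ∧ [l,x,t] ∈ J rCons

lemma RepN.num {x k} (h : RepN J x k) : [x] ∈ J rNum := by
  cases k with
  | zero => exact h.2
  | succ k => exact h.1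

lemma RepL.list {l v} (h : RepL J l v) : [l] ∈ J rList := by
  cases v with
  | nil => exact h.2
  | cons a v => exact h.1

lemma repN_succ (h : satTGD J g1) {x k} (hx : RepN J x k) :
    ∃ y, RepN J y (k+1) ∧ [x,y] ∈ J rS := by
  obtain ⟨y, hS, hN⟩ := step_g1 h hx.num
  exact ⟨y, ⟨hN, x, hx, hS⟩, hS⟩

lemma repL_cons (h : satTGD J g2) {t v x a} (ht : RepL J t v) (hx : RepN J x a) :
    ∃ l, RepL J l (a :: v) ∧ [l,x,t] ∈ J rCons := by
  obtain ⟨m, hC, hL⟩ := step_g2 h ht.list hx.num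
  exact ⟨m, ⟨hL, x, t, hx, ht, hC⟩, hC⟩

/-! ### Encoding of a code in an instance -/

def CodeEnc (J : Instance) : Code → Prop
  | .zero' => [cV .zero'] ∈ J rZero'
  | .succ => [cV .succ] ∈ J rSucc
  | .tail => [cV .tail] ∈ J rTail
  | .cons f g => [cV (.cons f g), cV f, cV g] ∈ J rConsC ∧ CodeEnc J f ∧ CodeEnc J g
  | .comp f g => [cV (.comp f g), cV f, cV g] ∈ J rComp ∧ CodeEnc J f ∧ CodeEnc J g
  | .case f g => [cV (.case f g), cV f, cV g] ∈ J rCase ∧ CodeEnc J f ∧ CodeEnc J g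
  | .fix f => [cV (.fix f), cV f] ∈ J rFix ∧ CodeEnc J f

end Undec

namespace Undec
open Turing.ToPartrec
variable {J : Instance}

lemma evalDerive (hsat : ∀ t ∈ rules, satTGD J t) {z₀ nl₀ : Val}
    (hz : RepN J z₀ 0) (hnl : RepL J nl₀ []) :
    ∀ c : Code, CodeEnc J c → ∀ v w, w ∈ c.eval v → ∀ l, RepL J l v →
      ∃ o, RepL J o w ∧ [cV c, l, o] ∈ J rEval := by
  have hg1 : satTGD J g1 := hsat g1 (by simp [rules])
  have hg2 : satTGD J g2 := hsat g2 (by simp [rules])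
  intro c
  induction c with
  | zero' =>
    intro hc v w hw l hl
    rw [Code.zero'_eval] at hw
    obtain rfl : w = 0 :: v := by simpa using hw
    obtain ⟨l0, hrep, hC⟩ := repL_cons hg2 hl hz
    exact ⟨l0, hrep, fire_z1 (hsat z1 (by simp [rules])) hc hC hz.1⟩
  | succ =>
    intro hc v w hw l hl
    rw [Code.succ_eval] at hw
    obtain rfl : w = [v.headI.succ] := by simpa using hw
    cases v with
    | nil =>
      obtain ⟨z', hz', hS⟩ := repN_succ hg1 hz
      obtain ⟨o, ho, hC⟩ := repL_cons hg2 hnl hz'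
      exact ⟨o, ho, fire_s2 (hsat s2 (by simp [rules])) hc hl.1 hz.1 hS hnl.1 hC⟩
    | cons a t =>
      obtain ⟨x, tn, hx, htn, hC1⟩ := hl.2
      obtain ⟨x', hx', hS⟩ := repN_succ hg1 hx
      obtain ⟨o, ho, hC2⟩ := repL_cons hg2 hnl hx'
      exact ⟨o, ho, fire_s1 (hsat s1 (by simp [rules])) hc hC1 hS hnl.1 hC2⟩
  | tail =>
    intro hc v w hw l hl
    rw [Code.tail_eval] at hw
    obtain rfl : w = v.tail := by simpa using hw
    cases v with
    | nil => exact ⟨l, hl, fire_t2 (hsat t2 (by simp [rules])) hc hl.1⟩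
    | cons a t =>
      obtain ⟨x, tn, hx, htn, hC⟩ := hl.2
      exact ⟨tn, htn, fire_t1 (hsat t1 (by simp [rules])) hc hC⟩
  | cons f fs ihf ihfs =>
    intro hc v w hw l hl
    rw [Code.cons_eval] at hw
    simp only [Part.bind_eq_bind, Part.mem_bind_iff, Part.pure_eq_some, Part.mem_some_iff] at hw
    obtain ⟨m, hm, ns, hns, rfl⟩ := hw
    obtain ⟨o1, ho1, hE1⟩ := ihf hc.2.1 v m hm l hl
    obtain ⟨o2, ho2, hE2⟩ := ihfs hc.2.2 v ns hns l hl
    cases m with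
    | nil =>
      obtain ⟨o, ho, hC⟩ := repL_cons hg2 ho2 hz
      exact ⟨o, ho, fire_cn2 (hsat cn2 (by simp [rules])) hc.1 hE1 ho1.1 hz.1 hE2 hC⟩
    | cons a mt =>
      obtain ⟨x, mtn, hx, hmtn, hC1⟩ := ho1.2
      obtain ⟨o, ho, hC2⟩ := repL_cons hg2 ho2 hx
      exact ⟨o, ho, fire_cn1 (hsat cn1 (by simp [rules])) hc.1 hE1 hC1 hE2 hC2⟩
  | comp f g ihf ihg =>
    intro hc v w hw l hl
    rw [Code.comp_eval] at hw
    simp only [Part.bind_eq_bind, Part.mem_bind_iff] at hw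
    obtain ⟨m, hm, hw2⟩ := Part.mem_bind_iff.1 hw
    obtain ⟨o1, ho1, hE1⟩ := ihg hc.2.2 v m hm l hl
    obtain ⟨o, ho, hE2⟩ := ihf hc.2.1 m w hw2 o1 ho1
    exact ⟨o, ho, fire_cp1 (hsat cp1 (by simp [rules])) hc.1 hE1 hE2⟩
  | case f g ihf ihg =>
    intro hc v w hw l hl
    rw [Code.case_eval] at hw
    cases v with
    | nil =>
      obtain ⟨o, ho, hE⟩ := ihf hc.2.1 [] w (by simpa using hw) l hl
      exact ⟨o, ho, fire_ca1 (hsat ca1 (by simp [rules])) hc.1 hl.1 hE⟩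
    | cons a t =>
      obtain ⟨x, tn, hx, htn, hC⟩ := hl.2
      cases a with
      | zero =>
        obtain ⟨o, ho, hE⟩ := ihf hc.2.1 t w (by simpa using hw) tn htn
        exact ⟨o, ho, fire_ca2 (hsat ca2 (by simp [rules])) hc.1 hC hx.1 hE⟩
      | succ a =>
        obtain ⟨x0, hx0, hS⟩ := hx.2
        obtain ⟨m, hm, hC2⟩ := repL_cons hg2 htn hx0
        obtain ⟨o, ho, hE⟩ := ihg hc.2.2 (a::t) w (by simpa using hw) m hm
        exact ⟨o, ho, fire_ca3 (hsat ca3 (by simp [rules])) hc.1 hC hS hC2 hE⟩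
  | fix f ihf =>
    intro hc v w hw l hl
    rw [Code.fix_eval] at hw
    refine PFun.fixInduction (C := fun a => ∀ l', RepL J l' a →
      ∃ o, RepL J o w ∧ [cV (.fix f), l', o] ∈ J rEval) hw ?_ l hl
    intro a' ha' ih l' hl'
    rcases PFun.mem_fix_iff.1 ha' with hstop | ⟨a'', hin, hrest⟩
    · obtain ⟨m, hm, heq⟩ := (Part.mem_map_iff _).1 hstop
      obtain ⟨o1, ho1, hE1⟩ := ihf hc.2 a' m hm l' hl'
      cases m with
      | nil =>
        obtain rfl : w = [] := by simpa using heq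
        exact ⟨o1, ho1, fire_f1 (hsat f1 (by simp [rules])) hc.1 hE1 ho1.1⟩
      | cons b mt =>
        cases b with
        | zero =>
          obtain rfl : mt = w := by simpa using heq
          obtain ⟨x, tn, hx, htn, hC⟩ := ho1.2
          exact ⟨tn, htn, fire_f2 (hsat f2 (by simp [rules])) hc.1 hE1 hC hx.1⟩
        | succ b => simp at heq
    · obtain ⟨m, hm, heq⟩ := (Part.mem_map_iff _).1 hin
      obtain ⟨o1, ho1, hE1⟩ := ihf hc.2 a' m hm l' hl'
      cases m with
      | nil => simp at heq
      | cons b mt =>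
        cases b with
        | zero => simp at heq
        | succ b =>
          obtain rfl : a'' = mt := by simpa using heq.symm
          obtain ⟨x', tn, hx', htn, hC⟩ := ho1.2
          obtain ⟨x0, hx0, hS⟩ := hx'.2
          obtain ⟨o, ho, hE2⟩ := ih a'' hin tn htn
          exact ⟨o, ho, fire_f3 (hsat f3 (by simp [rules])) hc.1 hE1 hC hS hE2⟩
end Undec

namespace Undec
open Turing.ToPartrec

/-! ### Preservation queries and the procedure -/

def q1 (r : RelName) : CQuery := ⟨[0], [A r [0]]⟩
def q2 (r : RelName) : CQuery := ⟨[0,1], [A r [0,1]]⟩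
def q3 (r : RelName) : CQuery := ⟨[0,1,2], [A r [0,1,2]]⟩

def presQs : List CQuery :=
  [q1 rZ, q2 rS, q1 rNum, q1 rNil, q1 rList, q3 rCons, q1 rZero', q1 rSucc, q1 rTail,
   q3 rConsC, q3 rComp, q3 rCase, q2 rFix, q1 rRoot, q1 rInput]

def Proc0 : Proc := ⟨{R | R ≠ rBad}, [], rules, presQs⟩

/-! ### The input instance -/

def codeFacts : Code → FinInst
  | .zero' => [(rZero', [cV .zero'])]
  | .succ => [(rSucc, [cV .succ])]
  | .tail => [(rTail, [cV .tail])]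
  | .cons f g => (rConsC, [cV (.cons f g), cV f, cV g]) :: (codeFacts f ++ codeFacts g)
  | .comp f g => (rComp, [cV (.comp f g), cV f, cV g]) :: (codeFacts f ++ codeFacts g)
  | .case f g => (rCase, [cV (.case f g), cV f, cV g]) :: (codeFacts f ++ codeFacts g)
  | .fix f => (rFix, [cV (.fix f), cV f]) :: codeFacts f

def inputFacts (n : ℕ) : FinInst :=
  (rZ, [nV 0]) :: (rNil, [lV []]) :: (rList, [lV []]) :: (rList, [lV [n]]) ::
  (rCons, [lV [n], nV n, lV []]) :: (rInput, [lV [n]]) ::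
  (((List.range (n+1)).map fun k => (rNum, [nV k])) ++
   ((List.range n).map fun k => (rS, [nV k, nV (k+1)])))

def instFacts (c : Code) (n : ℕ) : FinInst :=
  (rRoot, [cV c]) :: (codeFacts c ++ inputFacts n)

/-! ### Transfer of facts along preservation queries -/

lemma pres1 {I J : Instance} {r : RelName} (h : answers (q1 r) I ⊆ answers (q1 r) J)
    {a : Val} (ha : [a] ∈ I r) : [a] ∈ J r := by
  have hmem : [a] ∈ answers (q1 r) I := by
    refine ⟨fun _ => a, ?_, by simp [q1]⟩
    intro b hb; simp [q1, A] at hb; subst hb; simpa [holdsAtom, A] using ha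
  obtain ⟨ν, hb, he⟩ := h hmem
  have := hb (A r [0]) (by simp [q1])
  simp [q1] at he
  simpa [holdsAtom, A, ← he] using this

lemma pres2 {I J : Instance} {r : RelName} (h : answers (q2 r) I ⊆ answers (q2 r) J)
    {a b : Val} (ha : [a,b] ∈ I r) : [a,b] ∈ J r := by
  have hmem : [a,b] ∈ answers (q2 r) I := by
    refine ⟨fun i => [a,b].getD i 0, ?_, by simp [q2]⟩
    intro c hc; simp [q2, A] at hc; subst hc; simpa [holdsAtom, A] using ha
  obtain ⟨ν, hb, he⟩ := h hmem
  have := hb (A r [0,1]) (by simp [q2])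
  simp [q2] at he
  simpa [holdsAtom, A, ← he.1, ← he.2] using this

lemma pres3 {I J : Instance} {r : RelName} (h : answers (q3 r) I ⊆ answers (q3 r) J)
    {a b c : Val} (ha : [a,b,c] ∈ I r) : [a,b,c] ∈ J r := by
  have hmem : [a,b,c] ∈ answers (q3 r) I := by
    refine ⟨fun i => [a,b,c].getD i 0, ?_, by simp [q3]⟩
    intro d hd; simp [q3, A] at hd; subst hd; simpa [holdsAtom, A] using ha
  obtain ⟨ν, hb, he⟩ := h hmem
  have := hb (A r [0,1,2]) (by simp [q3])
  simp [q3] at he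
  simpa [holdsAtom, A, ← he.1, ← he.2.1, ← he.2.2] using this

end Undec

namespace Undec
open Turing.ToPartrec

lemma codeFacts_rel : ∀ (d : Code) (p : RelName × List Val), p ∈ codeFacts d → 10 ≤ p.1 := by
  intro d
  induction d with
  | zero' => intro p hp; simp [codeFacts] at hp; subst hp; simp [rZero']
  | succ => intro p hp; simp [codeFacts] at hp; subst hp; simp [rSucc]
  | tail => intro p hp; simp [codeFacts] at hp; subst hp; simp [rTail]
  | cons f g ihf ihg =>
    intro p hp
    rcases List.mem_cons.1 hp with rfl | hp
    · simp [rConsC]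
    · rcases List.mem_append.1 hp with hp | hp
      · exact ihf p hp
      · exact ihg p hp
  | comp f g ihf ihg =>
    intro p hp
    rcases List.mem_cons.1 hp with rfl | hp
    · simp [rComp]
    · rcases List.mem_append.1 hp with hp | hp
      · exact ihf p hp
      · exact ihg p hp
  | case f g ihf ihg =>
    intro p hp
    rcases List.mem_cons.1 hp with rfl | hp
    · simp [rCase]
    · rcases List.mem_append.1 hp with hp | hp
      · exact ihf p hp
      · exact ihg p hp
  | fix f ihf =>
    intro p hp
    rcases List.mem_cons.1 hp with rfl | hp
    · simp [rFix]
    · exact ihf p hp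

lemma instFacts_rel_ne_bad {c₀ : Code} {n : ℕ} : ∀ p ∈ instFacts c₀ n, p.1 ≠ rBad := by
  intro p hp
  rcases List.mem_cons.1 hp with rfl | hp
  · simp [rRoot, rBad]
  rcases List.mem_append.1 hp with hp | hp
  · have h10 := codeFacts_rel c₀ p hp
    intro hb; rw [hb] at h10; exact absurd h10 (by decide)
  · simp [inputFacts] at hp
    rcases hp with rfl|rfl|rfl|rfl|rfl|rfl|⟨k,_,rfl⟩|⟨k,_,rfl⟩ <;>
      simp [rZ, rNil, rList, rCons, rInput, rNum, rS, rBad]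

lemma codeEnc_inst : ∀ (d : Code) (L : FinInst), (∀ p ∈ codeFacts d, p ∈ L) →
    CodeEnc (toInstance L) d := by
  intro d
  induction d with
  | zero' => intro L h; exact h _ (by simp [codeFacts])
  | succ => intro L h; exact h _ (by simp [codeFacts])
  | tail => intro L h; exact h _ (by simp [codeFacts])
  | cons f g ihf ihg =>
    intro L h
    exact ⟨h _ (by simp [codeFacts]),
      ihf L (fun p hp => h p (List.mem_cons_of_mem _ (List.mem_append_left _ hp))),
      ihg L (fun p hp => h p (List.mem_cons_of_mem _ (List.mem_append_right _ hp)))⟩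
  | comp f g ihf ihg =>
    intro L h
    exact ⟨h _ (by simp [codeFacts]),
      ihf L (fun p hp => h p (List.mem_cons_of_mem _ (List.mem_append_left _ hp))),
      ihg L (fun p hp => h p (List.mem_cons_of_mem _ (List.mem_append_right _ hp)))⟩
  | case f g ihf ihg =>
    intro L h
    exact ⟨h _ (by simp [codeFacts]),
      ihf L (fun p hp => h p (List.mem_cons_of_mem _ (List.mem_append_left _ hp))),
      ihg L (fun p hp => h p (List.mem_cons_of_mem _ (List.mem_append_right _ hp)))⟩
  | fix f ihf =>
    intro L h
    exact ⟨h _ (by simp [codeFacts]),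
      ihf L (fun p hp => h p (List.mem_cons_of_mem _ hp))⟩

lemma codeEnc_trans {I J : Instance}
    (t1 : ∀ a, [a] ∈ I rZero' → [a] ∈ J rZero')
    (t2 : ∀ a, [a] ∈ I rSucc → [a] ∈ J rSucc)
    (t3 : ∀ a, [a] ∈ I rTail → [a] ∈ J rTail)
    (t4 : ∀ a b c, [a,b,c] ∈ I rConsC → [a,b,c] ∈ J rConsC)
    (t5 : ∀ a b c, [a,b,c] ∈ I rComp → [a,b,c] ∈ J rComp)
    (t6 : ∀ a b c, [a,b,c] ∈ I rCase → [a,b,c] ∈ J rCase)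
    (t7 : ∀ a b, [a,b] ∈ I rFix → [a,b] ∈ J rFix) :
    ∀ d, CodeEnc I d → CodeEnc J d := by
  intro d
  induction d with
  | zero' => exact fun h => t1 _ h
  | succ => exact fun h => t2 _ h
  | tail => exact fun h => t3 _ h
  | cons f g ihf ihg => exact fun h => ⟨t4 _ _ _ h.1, ihf h.2.1, ihg h.2.2⟩
  | comp f g ihf ihg => exact fun h => ⟨t5 _ _ _ h.1, ihf h.2.1, ihg h.2.2⟩
  | case f g ihf ihg => exact fun h => ⟨t6 _ _ _ h.1, ihf h.2.1, ihg h.2.2⟩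
  | fix f ihf => exact fun h => ⟨t7 _ _ h.1, ihf h.2⟩

lemma repN_chain {J : Instance} {n : ℕ}
    (hZ : [nV 0] ∈ J rZ) (hN : ∀ k ≤ n, [nV k] ∈ J rNum)
    (hS : ∀ k < n, [nV k, nV (k+1)] ∈ J rS) : ∀ k ≤ n, RepN J (nV k) k := by
  intro k
  induction k with
  | zero => exact fun _ => ⟨hZ, hN 0 (by omega)⟩
  | succ k ih => exact fun hk => ⟨hN _ hk, nV k, ih (by omega), hS k (by omega)⟩

lemma empty_of_halt {c₀ : Code} {n : ℕ} (h : (c₀.eval [n]).Dom) :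
    procOutcomes Proc0 (toInstance (instFacts c₀ n)) = ∅ := by
  ext J
  simp only [Set.mem_empty_iff_false, iff_false]
  intro hJ
  obtain ⟨-, hpost, hfroz, hpres⟩ := hJ
  set I := toInstance (instFacts c₀ n) with hI
  have hpost' : ∀ t ∈ rules, satTGD J t := hpost
  -- transfers along preservation queries
  have TZ : ∀ a, [a] ∈ I rZ → [a] ∈ J rZ :=
    fun a => pres1 (hpres _ (by simp [Proc0, presQs]))
  have TS : ∀ a b, [a,b] ∈ I rS → [a,b] ∈ J rS :=
    fun a b => pres2 (hpres _ (by simp [Proc0, presQs]))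
  have TNum : ∀ a, [a] ∈ I rNum → [a] ∈ J rNum :=
    fun a => pres1 (hpres _ (by simp [Proc0, presQs]))
  have TNil : ∀ a, [a] ∈ I rNil → [a] ∈ J rNil :=
    fun a => pres1 (hpres _ (by simp [Proc0, presQs]))
  have TList : ∀ a, [a] ∈ I rList → [a] ∈ J rList :=
    fun a => pres1 (hpres _ (by simp [Proc0, presQs]))
  have TCons : ∀ a b c, [a,b,c] ∈ I rCons → [a,b,c] ∈ J rCons :=
    fun a b c => pres3 (hpres _ (by simp [Proc0, presQs]))
  have TZero' : ∀ a, [a] ∈ I rZero' → [a] ∈ J rZero' :=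
    fun a => pres1 (hpres _ (by simp [Proc0, presQs]))
  have TSucc : ∀ a, [a] ∈ I rSucc → [a] ∈ J rSucc :=
    fun a => pres1 (hpres _ (by simp [Proc0, presQs]))
  have TTail : ∀ a, [a] ∈ I rTail → [a] ∈ J rTail :=
    fun a => pres1 (hpres _ (by simp [Proc0, presQs]))
  have TConsC : ∀ a b c, [a,b,c] ∈ I rConsC → [a,b,c] ∈ J rConsC :=
    fun a b c => pres3 (hpres _ (by simp [Proc0, presQs]))
  have TComp : ∀ a b c, [a,b,c] ∈ I rComp → [a,b,c] ∈ J rComp :=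
    fun a b c => pres3 (hpres _ (by simp [Proc0, presQs]))
  have TCase : ∀ a b c, [a,b,c] ∈ I rCase → [a,b,c] ∈ J rCase :=
    fun a b c => pres3 (hpres _ (by simp [Proc0, presQs]))
  have TFix : ∀ a b, [a,b] ∈ I rFix → [a,b] ∈ J rFix :=
    fun a b => pres2 (hpres _ (by simp [Proc0, presQs]))
  have TRoot : ∀ a, [a] ∈ I rRoot → [a] ∈ J rRoot :=
    fun a => pres1 (hpres _ (by simp [Proc0, presQs]))
  have TInput : ∀ a, [a] ∈ I rInput → [a] ∈ J rInput :=
    fun a => pres1 (hpres _ (by simp [Proc0, presQs]))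
  -- facts about I
  have memInput : ∀ p ∈ inputFacts n, p ∈ instFacts c₀ n := fun p hp =>
    List.mem_cons_of_mem _ (List.mem_append_right _ hp)
  have hZI : [nV 0] ∈ J rZ := TZ _ (memInput _ (by simp [inputFacts]))
  have hNumI : ∀ k ≤ n, [nV k] ∈ J rNum := by
    intro k hk
    refine TNum _ (memInput _ ?_)
    exact List.mem_cons_of_mem _ (List.mem_cons_of_mem _ (List.mem_cons_of_mem _
      (List.mem_cons_of_mem _ (List.mem_cons_of_mem _ (List.mem_cons_of_mem _
      (List.mem_append_left _ (List.mem_map.2 ⟨k, List.mem_range.2 (by omega), rfl⟩)))))))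
  have hSI : ∀ k < n, [nV k, nV (k+1)] ∈ J rS := by
    intro k hk
    refine TS _ _ (memInput _ ?_)
    exact List.mem_cons_of_mem _ (List.mem_cons_of_mem _ (List.mem_cons_of_mem _
      (List.mem_cons_of_mem _ (List.mem_cons_of_mem _ (List.mem_cons_of_mem _
      (List.mem_append_right _ (List.mem_map.2 ⟨k, List.mem_range.2 (by omega), rfl⟩)))))))
  have hNil : [lV []] ∈ J rNil := TNil _ (memInput _ (by simp [inputFacts]))
  have hListNil : [lV []] ∈ J rList := TList _ (memInput _ (by simp [inputFacts]))
  have hListn : [lV [n]] ∈ J rList := TList _ (memInput _ (by simp [inputFacts]))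
  have hConsn : [lV [n], nV n, lV []] ∈ J rCons := TCons _ _ _ (memInput _ (by simp [inputFacts]))
  have hRootJ : [cV c₀] ∈ J rRoot := TRoot _ (by simp [hI, toInstance, instFacts])
  have hInputJ : [lV [n]] ∈ J rInput := TInput _ (memInput _ (by simp [inputFacts]))
  have hz : RepN J (nV 0) 0 := ⟨hZI, hNumI 0 (by omega)⟩
  have hnl : RepL J (lV []) [] := ⟨hNil, hListNil⟩
  have hln : RepL J (lV [n]) [n] :=
    ⟨hListn, nV n, lV [], repN_chain hZI hNumI hSI n le_rfl, hnl, hConsn⟩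
  have hEnc : CodeEnc J c₀ := by
    refine codeEnc_trans TZero' TSucc TTail TConsC TComp TCase TFix c₀ ?_
    refine codeEnc_inst c₀ _ (fun p hp => ?_)
    exact List.mem_cons_of_mem _ (List.mem_append_left _ hp)
  obtain ⟨w, hw⟩ := Part.dom_iff_mem.1 h
  obtain ⟨o, ho, hE⟩ := evalDerive hpost' hz hnl c₀ hEnc [n] w hw (lV [n]) hln
  have hbad : ([] : List Val) ∈ J rBad :=
    fire_b1 (hpost' b1 (by simp [rules])) hRootJ hInputJ hE
  have hbadI : ([] : List Val) ∈ I rBad := by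
    rw [hfroz rBad (by simp [Proc0])]
    exact hbad
  exact instFacts_rel_ne_bad _ hbadI rfl

end Undec

namespace Undec
open Turing.ToPartrec

/-- The canonical model: intended interpretation of all relations. -/
def M (c₀ : Code) (n : ℕ) : Instance := fun R =>
  match R with
  | 0 => {[nV 0]}
  | 1 => {t | ∃ k, t = [nV k, nV (k+1)]}
  | 2 => {t | ∃ k, t = [nV k]}
  | 3 => {[lV []]}
  | 4 => {t | ∃ v, t = [lV v]}
  | 5 => {t | ∃ a v, t = [lV (a::v), nV a, lV v]}
  | 6 => {t | ∃ c v w, w ∈ Code.eval c v ∧ t = [cV c, lV v, lV w]}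
  | 7 => ∅
  | 8 => {[cV c₀]}
  | 9 => {[lV [n]]}
  | 10 => {[cV .zero']}
  | 11 => {[cV .succ]}
  | 12 => {[cV .tail]}
  | 13 => {t | ∃ f g, t = [cV (.cons f g), cV f, cV g]}
  | 14 => {t | ∃ f g, t = [cV (.comp f g), cV f, cV g]}
  | 15 => {t | ∃ f g, t = [cV (.case f g), cV f, cV g]}
  | 16 => {t | ∃ f, t = [cV (.fix f), cV f]}
  | _ => ∅

variable {c₀ : Code} {n : ℕ}

end Undec

namespace Undec
open Turing.ToPartrec
variable {c₀ : Code} {n : ℕ}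

lemma M_sat_g1 : satTGD (M c₀ n) g1 := by
  intro ν hb
  have h1 := hb (A rNum [0]) (by simp [g1])
  simp only [holdsAtom, A, M, rNum, List.map, Set.mem_setOf_eq] at h1
  obtain ⟨k, hk⟩ := h1
  simp only [List.cons.injEq, and_true] at hk
  refine ⟨Function.update ν 1 (nV (k+1)), ?_, ?_⟩
  · intro v hv
    have hv0 : v = 0 := by
      obtain ⟨a, ha, hva⟩ := hv
      simp [g1, A] at ha; subst ha; simpa [A] using hva
    subst hv0
    simp
  · intro a ha
    simp [g1, A] at ha
    rcases ha with rfl | rfl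
    · simp only [holdsAtom, A, M, rS, List.map, Set.mem_setOf_eq]
      exact ⟨k, by simp [hk]⟩
    · simp only [holdsAtom, A, M, rNum, List.map, Set.mem_setOf_eq]
      exact ⟨k+1, by simp⟩

lemma M_sat_g2 : satTGD (M c₀ n) g2 := by
  intro ν hb
  have h1 := hb (A rList [0]) (by simp [g2])
  have h2 := hb (A rNum [1]) (by simp [g2])
  simp only [holdsAtom, A, M, rList, rNum, List.map, Set.mem_setOf_eq] at h1 h2
  obtain ⟨v, hv⟩ := h1
  obtain ⟨k, hk⟩ := h2
  simp only [List.cons.injEq, and_true] at hv hk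
  refine ⟨Function.update ν 2 (lV (k::v)), ?_, ?_⟩
  · intro u hu
    have hu' : u = 0 ∨ u = 1 := by
      obtain ⟨a, ha, hua⟩ := hu
      simp [g2, A] at ha
      rcases ha with rfl | rfl <;> simp [A] at hua <;> tauto
    rcases hu' with rfl | rfl <;> simp
  · intro a ha
    simp [g2, A] at ha
    rcases ha with rfl | rfl
    · simp only [holdsAtom, A, M, rCons, List.map, Set.mem_setOf_eq]
      exact ⟨k, v, by simp [hv, hk]⟩
    · simp only [holdsAtom, A, M, rList, List.map, Set.mem_setOf_eq]
      exact ⟨k::v, by simp⟩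

lemma M_sat_z1 : satTGD (M c₀ n) z1 := by
  intro ν hb
  refine ⟨ν, fun _ _ => rfl, ?_⟩
  have h1 := hb (A rZero' [0]) (by simp [z1])
  have h2 := hb (A rCons [3,2,1]) (by simp [z1])
  have h3 := hb (A rZ [2]) (by simp [z1])
  simp only [holdsAtom, A, M, rZero', rCons, rZ, List.map, Set.mem_setOf_eq,
    Set.mem_singleton_iff, List.cons.injEq, and_true] at h1 h2 h3
  obtain ⟨a, v, e3, e2, e1⟩ := h2
  have ha : a = 0 := nV_inj (by rw [← e2, h3])
  subst ha
  intro b hbm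
  simp [z1, A] at hbm
  subst hbm
  simp only [holdsAtom, A, M, rEval, List.map, Set.mem_setOf_eq]
  exact ⟨.zero', v, 0::v, by simp [Code.zero'_eval], by simp [h1, e1, e3]⟩

lemma M_sat_s1 : satTGD (M c₀ n) s1 := by
  intro ν hb
  refine ⟨ν, fun _ _ => rfl, ?_⟩
  have h1 := hb (A rSucc [0]) (by simp [s1])
  have h2 := hb (A rCons [1,2,3]) (by simp [s1])
  have h3 := hb (A rS [2,4]) (by simp [s1])
  have h4 := hb (A rNil [5]) (by simp [s1])
  have h5 := hb (A rCons [6,4,5]) (by simp [s1])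
  simp only [holdsAtom, A, M, rSucc, rCons, rS, rNil, List.map, Set.mem_setOf_eq,
    Set.mem_singleton_iff, List.cons.injEq, and_true] at h1 h2 h3 h4 h5
  obtain ⟨a, v, e1, e2, e3⟩ := h2
  obtain ⟨k, e4, e5⟩ := h3
  obtain ⟨b, u, e6, e7, e8⟩ := h5
  have hak : a = k := nV_inj (by rw [← e2, e4])
  have hbk : b = k+1 := nV_inj (by rw [← e7, e5])
  have hu : u = [] := lV_inj (by rw [← e8, h4])
  subst hak hbk hu
  intro c hc
  simp [s1, A] at hc
  subst hc
  simp only [holdsAtom, A, M, rEval, List.map, Set.mem_setOf_eq]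
  refine ⟨.succ, a::v, [a+1], by simp [Code.succ_eval], by simp [h1, e1, e6]⟩

lemma M_sat_s2 : satTGD (M c₀ n) s2 := by
  intro ν hb
  refine ⟨ν, fun _ _ => rfl, ?_⟩
  have h1 := hb (A rSucc [0]) (by simp [s2])
  have h2 := hb (A rNil [1]) (by simp [s2])
  have h3 := hb (A rZ [2]) (by simp [s2])
  have h4 := hb (A rS [2,4]) (by simp [s2])
  have h5 := hb (A rNil [5]) (by simp [s2])
  have h6 := hb (A rCons [6,4,5]) (by simp [s2])
  simp only [holdsAtom, A, M, rSucc, rNil, rZ, rCons, rS, List.map, Set.mem_setOf_eq,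
    Set.mem_singleton_iff, List.cons.injEq, and_true] at h1 h2 h3 h4 h5 h6
  obtain ⟨k, e4, e5⟩ := h4
  obtain ⟨b, u, e6, e7, e8⟩ := h6
  have hk : k = 0 := nV_inj (by rw [← e4, h3])
  subst hk
  have hbk : b = 1 := nV_inj (by rw [← e7, e5])
  have hu : u = [] := lV_inj (by rw [← e8, h5])
  subst hbk hu
  intro c hc
  simp [s2, A] at hc
  subst hc
  simp only [holdsAtom, A, M, rEval, List.map, Set.mem_setOf_eq]
  exact ⟨.succ, [], [1], by simp [Code.succ_eval], by simp [h1, h2, e6]⟩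

lemma M_sat_t1 : satTGD (M c₀ n) t1 := by
  intro ν hb
  refine ⟨ν, fun _ _ => rfl, ?_⟩
  have h1 := hb (A rTail [0]) (by simp [t1])
  have h2 := hb (A rCons [1,2,3]) (by simp [t1])
  simp only [holdsAtom, A, M, rTail, rCons, List.map, Set.mem_setOf_eq,
    Set.mem_singleton_iff, List.cons.injEq, and_true] at h1 h2
  obtain ⟨a, v, e1, e2, e3⟩ := h2
  intro c hc
  simp [t1, A] at hc
  subst hc
  simp only [holdsAtom, A, M, rEval, List.map, Set.mem_setOf_eq]
  exact ⟨.tail, a::v, v, by simp [Code.tail_eval], by simp [h1, e1, e3]⟩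

lemma M_sat_t2 : satTGD (M c₀ n) t2 := by
  intro ν hb
  refine ⟨ν, fun _ _ => rfl, ?_⟩
  have h1 := hb (A rTail [0]) (by simp [t2])
  have h2 := hb (A rNil [1]) (by simp [t2])
  simp only [holdsAtom, A, M, rTail, rNil, List.map, Set.mem_setOf_eq,
    Set.mem_singleton_iff, List.cons.injEq, and_true] at h1 h2
  intro c hc
  simp [t2, A] at hc
  subst hc
  simp only [holdsAtom, A, M, rEval, List.map, Set.mem_setOf_eq]
  exact ⟨.tail, [], [], by simp [Code.tail_eval], by simp [h1, h2]⟩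

lemma M_sat_cn1 : satTGD (M c₀ n) cn1 := by
  intro ν hb
  refine ⟨ν, fun _ _ => rfl, ?_⟩
  have h1 := hb (A rConsC [0,1,2]) (by simp [cn1])
  have h2 := hb (A rEval [1,3,4]) (by simp [cn1])
  have h3 := hb (A rCons [4,5,6]) (by simp [cn1])
  have h4 := hb (A rEval [2,3,7]) (by simp [cn1])
  have h5 := hb (A rCons [8,5,7]) (by simp [cn1])
  simp only [holdsAtom, A, M, rConsC, rEval, rCons, List.map, Set.mem_setOf_eq,
    List.cons.injEq, and_true] at h1 h2 h3 h4 h5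
  obtain ⟨f, g, e0, e1, e2⟩ := h1
  obtain ⟨cf, v, m, hm, e3, e4, e5⟩ := h2
  obtain ⟨a, mt, e6, e7, e8⟩ := h3
  obtain ⟨cg, v', ns, hns, e9, e10, e11⟩ := h4
  obtain ⟨b, u, e12, e13, e14⟩ := h5
  have hcf : cf = f := cV_inj (by rw [← e3, e1])
  have hcg : cg = g := cV_inj (by rw [← e9, e2])
  have hv' : v' = v := lV_inj (by rw [← e10, e4])
  have hma : m = a::mt := lV_inj (by rw [← e5, e6])
  have hba : b = a := nV_inj (by rw [← e13, e7])
  have hu : u = ns := lV_inj (by rw [← e14, e11])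
  subst hcf hcg hv' hma hba hu
  intro c hc
  simp [cn1, A] at hc
  subst hc
  simp only [holdsAtom, A, M, rEval, List.map, Set.mem_setOf_eq]
  refine ⟨.cons cf cg, v', b::u, ?_, by simp [e0, e4, e12]⟩
  rw [Code.cons_eval]
  simp only [Part.bind_eq_bind, Part.mem_bind_iff, Part.pure_eq_some, Part.mem_some_iff]
  exact ⟨b::mt, hm, u, hns, rfl⟩

lemma M_sat_cn2 : satTGD (M c₀ n) cn2 := by
  intro ν hb
  refine ⟨ν, fun _ _ => rfl, ?_⟩
  have h1 := hb (A rConsC [0,1,2]) (by simp [cn2])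
  have h2 := hb (A rEval [1,3,4]) (by simp [cn2])
  have h3 := hb (A rNil [4]) (by simp [cn2])
  have h4 := hb (A rZ [5]) (by simp [cn2])
  have h5 := hb (A rEval [2,3,7]) (by simp [cn2])
  have h6 := hb (A rCons [8,5,7]) (by simp [cn2])
  simp only [holdsAtom, A, M, rConsC, rEval, rNil, rZ, rCons, List.map, Set.mem_setOf_eq,
    Set.mem_singleton_iff, List.cons.injEq, and_true] at h1 h2 h3 h4 h5 h6
  obtain ⟨f, g, e0, e1, e2⟩ := h1
  obtain ⟨cf, v, m, hm, e3, e4, e5⟩ := h2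
  obtain ⟨cg, v', ns, hns, e9, e10, e11⟩ := h5
  obtain ⟨b, u, e12, e13, e14⟩ := h6
  have hcf : cf = f := cV_inj (by rw [← e3, e1])
  have hcg : cg = g := cV_inj (by rw [← e9, e2])
  have hv' : v' = v := lV_inj (by rw [← e10, e4])
  have hm0 : m = [] := lV_inj (by rw [← e5, h3])
  have hb0 : b = 0 := nV_inj (by rw [← e13, h4])
  have hu : u = ns := lV_inj (by rw [← e14, e11])
  subst hcf hcg hv' hm0 hb0 hu
  intro c hc
  simp [cn2, A] at hc
  subst hc
  simp only [holdsAtom, A, M, rEval, List.map, Set.mem_setOf_eq]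
  refine ⟨.cons cf cg, v', 0::u, ?_, by simp [e0, e4, e12]⟩
  rw [Code.cons_eval]
  simp only [Part.bind_eq_bind, Part.mem_bind_iff, Part.pure_eq_some, Part.mem_some_iff]
  exact ⟨[], hm, u, hns, rfl⟩

lemma M_sat_cp1 : satTGD (M c₀ n) cp1 := by
  intro ν hb
  refine ⟨ν, fun _ _ => rfl, ?_⟩
  have h1 := hb (A rComp [0,1,2]) (by simp [cp1])
  have h2 := hb (A rEval [2,3,4]) (by simp [cp1])
  have h3 := hb (A rEval [1,4,5]) (by simp [cp1])
  simp only [holdsAtom, A, M, rComp, rEval, List.map, Set.mem_setOf_eq] at h1 h2 h3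
  intro a ha
  simp only [cp1, List.mem_singleton] at ha
  subst ha
  simp only [holdsAtom, A, M, rEval, List.map, Set.mem_setOf_eq]
  obtain ⟨f, g, he⟩ := h1
  obtain ⟨cg, v, m, hm, he2⟩ := h2
  obtain ⟨cf, v', w, hw, he3⟩ := h3
  simp only [List.cons.injEq, and_true] at he he2 he3
  obtain ⟨e0, e1, e2⟩ := he
  obtain ⟨e3, e4, e5⟩ := he2
  obtain ⟨e6, e7, e8⟩ := he3
  have hg : cg = g := cV_inj (by rw [← e3, e2])
  have hf : cf = f := cV_inj (by rw [← e6, e1])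
  have hv' : v' = m := lV_inj (by rw [← e7, e5])
  subst hg hf hv'
  refine ⟨Code.comp cf cg, v, w, ?_, ?_⟩
  · rw [Code.comp_eval]
    exact Part.mem_bind_iff.2 ⟨v', hm, hw⟩
  · simp [e0, e4, e8]

lemma M_sat_ca1 : satTGD (M c₀ n) ca1 := by
  intro ν hb
  refine ⟨ν, fun _ _ => rfl, ?_⟩
  have h1 := hb (A rCase [0,1,2]) (by simp [ca1])
  have h2 := hb (A rNil [3]) (by simp [ca1])
  have h3 := hb (A rEval [1,3,4]) (by simp [ca1])
  simp only [holdsAtom, A, M, rCase, rNil, rEval, List.map, Set.mem_setOf_eq,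
    Set.mem_singleton_iff, List.cons.injEq, and_true] at h1 h2 h3
  obtain ⟨f, g, e0, e1, e2⟩ := h1
  obtain ⟨cf, v, w, hw, e3, e4, e5⟩ := h3
  have hcf : cf = f := cV_inj (by rw [← e3, e1])
  have hv : v = [] := lV_inj (by rw [← e4, h2])
  subst hcf hv
  intro c hc
  simp [ca1, A] at hc
  subst hc
  simp only [holdsAtom, A, M, rEval, List.map, Set.mem_setOf_eq]
  refine ⟨.case cf g, [], w, ?_, by simp [e0, h2, e5]⟩
  rw [Code.case_eval]
  simpa using hw

lemma M_sat_ca2 : satTGD (M c₀ n) ca2 := by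
  intro ν hb
  refine ⟨ν, fun _ _ => rfl, ?_⟩
  have h1 := hb (A rCase [0,1,2]) (by simp [ca2])
  have h2 := hb (A rCons [3,4,5]) (by simp [ca2])
  have h3 := hb (A rZ [4]) (by simp [ca2])
  have h4 := hb (A rEval [1,5,6]) (by simp [ca2])
  simp only [holdsAtom, A, M, rCase, rCons, rZ, rEval, List.map, Set.mem_setOf_eq,
    Set.mem_singleton_iff, List.cons.injEq, and_true] at h1 h2 h3 h4
  obtain ⟨f, g, e0, e1, e2⟩ := h1
  obtain ⟨a, v, e3, e4, e5⟩ := h2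
  obtain ⟨cf, t, w, hw, e6, e7, e8⟩ := h4
  have ha : a = 0 := nV_inj (by rw [← e4, h3])
  subst ha
  have hcf : cf = f := cV_inj (by rw [← e6, e1])
  have ht : t = v := lV_inj (by rw [← e7, e5])
  subst hcf ht
  intro c hc
  simp [ca2, A] at hc
  subst hc
  simp only [holdsAtom, A, M, rEval, List.map, Set.mem_setOf_eq]
  refine ⟨.case cf g, 0::t, w, ?_, by simp [e0, e3, e8]⟩
  rw [Code.case_eval]
  simpa using hw

lemma M_sat_ca3 : satTGD (M c₀ n) ca3 := by
  intro ν hb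
  refine ⟨ν, fun _ _ => rfl, ?_⟩
  have h1 := hb (A rCase [0,1,2]) (by simp [ca3])
  have h2 := hb (A rCons [3,4,5]) (by simp [ca3])
  have h3 := hb (A rS [6,4]) (by simp [ca3])
  have h4 := hb (A rCons [7,6,5]) (by simp [ca3])
  have h5 := hb (A rEval [2,7,8]) (by simp [ca3])
  simp only [holdsAtom, A, M, rCase, rCons, rS, rEval, List.map, Set.mem_setOf_eq,
    List.cons.injEq, and_true] at h1 h2 h3 h4 h5
  obtain ⟨f, g, e0, e1, e2⟩ := h1
  obtain ⟨a, v, e3, e4, e5⟩ := h2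
  obtain ⟨k, e6, e7⟩ := h3
  obtain ⟨b, u, e8, e9, e10⟩ := h4
  obtain ⟨cg, m, w, hw, e11, e12, e13⟩ := h5
  have ha : a = k+1 := nV_inj (by rw [← e4, e7])
  have hbk : b = k := nV_inj (by rw [← e9, e6])
  have hu : u = v := lV_inj (by rw [← e10, e5])
  have hcg : cg = g := cV_inj (by rw [← e11, e2])
  have hm : m = b::u := lV_inj (by rw [← e12, e8])
  subst ha hbk hu hcg hm
  intro c hc
  simp [ca3, A] at hc
  subst hc
  simp only [holdsAtom, A, M, rEval, List.map, Set.mem_setOf_eq]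
  refine ⟨.case f cg, (b+1)::u, w, ?_, by simp [e0, e3, e13]⟩
  rw [Code.case_eval]
  simpa using hw

lemma M_sat_f1 : satTGD (M c₀ n) f1 := by
  intro ν hb
  refine ⟨ν, fun _ _ => rfl, ?_⟩
  have h1 := hb (A rFix [0,1]) (by simp [f1])
  have h2 := hb (A rEval [1,2,3]) (by simp [f1])
  have h3 := hb (A rNil [3]) (by simp [f1])
  simp only [holdsAtom, A, M, rFix, rEval, rNil, List.map, Set.mem_setOf_eq,
    Set.mem_singleton_iff, List.cons.injEq, and_true] at h1 h2 h3
  obtain ⟨f, e0, e1⟩ := h1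
  obtain ⟨cf, v, m, hm, e2, e3, e4⟩ := h2
  have hcf : cf = f := cV_inj (by rw [← e2, e1])
  have hm0 : m = [] := lV_inj (by rw [← e4, h3])
  subst hcf hm0
  intro c hc
  simp [f1, A] at hc
  subst hc
  simp only [holdsAtom, A, M, rEval, List.map, Set.mem_setOf_eq]
  refine ⟨.fix cf, v, [], ?_, by simp [e0, e3, h3]⟩
  rw [Code.fix_eval]
  apply PFun.fix_stop
  simp only [Part.mem_map_iff]
  exact ⟨[], hm, by simp⟩

lemma M_sat_f2 : satTGD (M c₀ n) f2 := by
  intro ν hb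
  refine ⟨ν, fun _ _ => rfl, ?_⟩
  have h1 := hb (A rFix [0,1]) (by simp [f2])
  have h2 := hb (A rEval [1,2,3]) (by simp [f2])
  have h3 := hb (A rCons [3,4,5]) (by simp [f2])
  have h4 := hb (A rZ [4]) (by simp [f2])
  simp only [holdsAtom, A, M, rFix, rEval, rCons, rZ, List.map, Set.mem_setOf_eq,
    Set.mem_singleton_iff, List.cons.injEq, and_true] at h1 h2 h3 h4
  obtain ⟨f, e0, e1⟩ := h1
  obtain ⟨cf, v, m, hm, e2, e3, e4⟩ := h2
  obtain ⟨a, u, e5, e6, e7⟩ := h3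
  have hcf : cf = f := cV_inj (by rw [← e2, e1])
  have hm0 : m = a::u := lV_inj (by rw [← e4, e5])
  have ha : a = 0 := nV_inj (by rw [← e6, h4])
  subst hcf hm0 ha
  intro c hc
  simp [f2, A] at hc
  subst hc
  simp only [holdsAtom, A, M, rEval, List.map, Set.mem_setOf_eq]
  refine ⟨.fix cf, v, u, ?_, by simp [e0, e3, e7]⟩
  rw [Code.fix_eval]
  apply PFun.fix_stop
  simp only [Part.mem_map_iff]
  exact ⟨0::u, hm, by simp⟩

lemma M_sat_f3 : satTGD (M c₀ n) f3 := by
  intro ν hb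
  refine ⟨ν, fun _ _ => rfl, ?_⟩
  have h1 := hb (A rFix [0,1]) (by simp [f3])
  have h2 := hb (A rEval [1,2,3]) (by simp [f3])
  have h3 := hb (A rCons [3,4,5]) (by simp [f3])
  have h4 := hb (A rS [6,4]) (by simp [f3])
  have h5 := hb (A rEval [0,5,7]) (by simp [f3])
  simp only [holdsAtom, A, M, rFix, rEval, rCons, rS, List.map, Set.mem_setOf_eq,
    List.cons.injEq, and_true] at h1 h2 h3 h4 h5
  obtain ⟨f, e0, e1⟩ := h1
  obtain ⟨cf, v, m, hm, e2, e3, e4⟩ := h2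
  obtain ⟨a, u, e5, e6, e7⟩ := h3
  obtain ⟨k, e8, e9⟩ := h4
  obtain ⟨cfx, t, w, hw, e10, e11, e12⟩ := h5
  have hcf : cf = f := cV_inj (by rw [← e2, e1])
  have hm0 : m = a::u := lV_inj (by rw [← e4, e5])
  have ha : a = k+1 := nV_inj (by rw [← e6, e9])
  have hcfx : cfx = .fix cf := cV_inj (by rw [← e10, e0]; rw [hcf])
  have ht : t = u := lV_inj (by rw [← e11, e7])
  subst hcf hm0 ha hcfx ht
  intro c hc
  simp [f3, A] at hc
  subst hc
  simp only [holdsAtom, A, M, rEval, List.map, Set.mem_setOf_eq]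
  refine ⟨.fix cf, v, w, ?_, by simp [e0, e3, e12]⟩
  rw [Code.fix_eval] at hw ⊢
  refine PFun.mem_fix_iff.2 (Or.inr ⟨t, ?_, ?_⟩)
  swap
  · exact hw
  · simp only [Part.mem_map_iff]
    exact ⟨(k+1)::t, hm, by simp⟩

lemma M_sat_b1 (hndom : ¬ (c₀.eval [n]).Dom) : satTGD (M c₀ n) b1 := by
  intro ν hb
  exfalso
  have h1 := hb (A rRoot [0]) (by simp [b1])
  have h2 := hb (A rInput [1]) (by simp [b1])
  have h3 := hb (A rEval [0,1,2]) (by simp [b1])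
  simp only [holdsAtom, A, M, rRoot, rInput, rEval, List.map, Set.mem_setOf_eq,
    Set.mem_singleton_iff, List.cons.injEq, and_true] at h1 h2 h3
  obtain ⟨c, v, w, hw, e0, e1, e2⟩ := h3
  have hc : c = c₀ := cV_inj (by rw [← e0, h1])
  have hv : v = [n] := lV_inj (by rw [← e1, h2])
  subst hc hv
  exact hndom (Part.dom_iff_mem.2 ⟨w, hw⟩)

end Undec

namespace Undec
open Turing.ToPartrec

lemma codeFacts_M {c₀ : Code} {n : ℕ} :
    ∀ d : Code, ∀ p ∈ codeFacts d, p.2 ∈ M c₀ n p.1 := by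
  intro d
  induction d with
  | zero' => intro p hp; simp [codeFacts] at hp; subst hp; simp [M, rZero']
  | succ => intro p hp; simp [codeFacts] at hp; subst hp; simp [M, rSucc]
  | tail => intro p hp; simp [codeFacts] at hp; subst hp; simp [M, rTail]
  | cons f g ihf ihg =>
    intro p hp
    rcases List.mem_cons.1 hp with rfl | hp
    · exact ⟨f, g, rfl⟩
    · rcases List.mem_append.1 hp with hp | hp
      · exact ihf p hp
      · exact ihg p hp
  | comp f g ihf ihg =>
    intro p hp
    rcases List.mem_cons.1 hp with rfl | hp
    · exact ⟨f, g, rfl⟩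
    · rcases List.mem_append.1 hp with hp | hp
      · exact ihf p hp
      · exact ihg p hp
  | case f g ihf ihg =>
    intro p hp
    rcases List.mem_cons.1 hp with rfl | hp
    · exact ⟨f, g, rfl⟩
    · rcases List.mem_append.1 hp with hp | hp
      · exact ihf p hp
      · exact ihg p hp
  | fix f ihf =>
    intro p hp
    rcases List.mem_cons.1 hp with rfl | hp
    · exact ⟨f, rfl⟩
    · exact ihf p hp

lemma I_le_M {c₀ : Code} {n : ℕ} : ∀ R, toInstance (instFacts c₀ n) R ⊆ M c₀ n R := by
  intro R t ht
  have hp : (R, t) ∈ instFacts c₀ n := ht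
  rcases List.mem_cons.1 hp with heq | hp
  · injection heq with h1 h2; subst h1; subst h2; simp [M, rRoot]
  rcases List.mem_append.1 hp with hp | hp
  · exact codeFacts_M c₀ _ hp
  rcases List.mem_cons.1 hp with heq | hp
  · injection heq with h1 h2; subst h1; subst h2; simp [M, rZ]
  rcases List.mem_cons.1 hp with heq | hp
  · injection heq with h1 h2; subst h1; subst h2; simp [M, rNil]
  rcases List.mem_cons.1 hp with heq | hp
  · injection heq with h1 h2; subst h1; subst h2; exact ⟨[], rfl⟩
  rcases List.mem_cons.1 hp with heq | hp
  · injection heq with h1 h2; subst h1; subst h2; exact ⟨[n], rfl⟩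
  rcases List.mem_cons.1 hp with heq | hp
  · injection heq with h1 h2; subst h1; subst h2; exact ⟨n, [], rfl⟩
  rcases List.mem_cons.1 hp with heq | hp
  · injection heq with h1 h2; subst h1; subst h2; simp [M, rInput]
  rcases List.mem_append.1 hp with hp | hp
  · obtain ⟨k, hk, heq⟩ := List.mem_map.1 hp
    injection heq with h1 h2; subst h1; subst h2; exact ⟨k, rfl⟩
  · obtain ⟨k, hk, heq⟩ := List.mem_map.1 hp
    injection heq with h1 h2; subst h1; subst h2; exact ⟨k, rfl⟩

lemma answers_mono {I J : Instance} (h : ∀ R, I R ⊆ J R) (q : CQuery) :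
    answers q I ⊆ answers q J := by
  rintro l ⟨ν, hb, rfl⟩
  exact ⟨ν, fun a ha => h _ (hb a ha), rfl⟩

lemma model_outcome {c₀ : Code} {n : ℕ} (h : ¬(c₀.eval [n]).Dom) :
    M c₀ n ∈ procOutcomes Proc0 (toInstance (instFacts c₀ n)) := by
  refine ⟨by simp [Proc0], ?_, ?_, ?_⟩
  · intro t ht
    simp only [Proc0, rules, List.mem_cons, List.not_mem_nil, or_false] at ht
    rcases ht with rfl|rfl|rfl|rfl|rfl|rfl|rfl|rfl|rfl|rfl|rfl|rfl|rfl|rfl|rfl|rfl|rfl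
    exacts [M_sat_g1, M_sat_g2, M_sat_z1, M_sat_s1, M_sat_s2, M_sat_t1, M_sat_t2,
      M_sat_cn1, M_sat_cn2, M_sat_cp1, M_sat_ca1, M_sat_ca2, M_sat_ca3,
      M_sat_f1, M_sat_f2, M_sat_f3, M_sat_b1 h]
  · intro R hR
    have hRb : R = rBad := by simpa [Proc0] using hR
    subst hRb
    ext t
    constructor
    · intro ht; exact absurd rfl (instFacts_rel_ne_bad _ ht)
    · intro ht; simp [M, rBad] at ht
  · intro q hq
    exact answers_mono I_le_M q

lemma outcome_nonempty_iff {c₀ : Code} {n : ℕ} :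
    (procOutcomes Proc0 (toInstance (instFacts c₀ n))).Nonempty ↔ ¬ (c₀.eval [n]).Dom := by
  constructor
  · rintro ⟨J, hJ⟩ hdom
    rw [empty_of_halt hdom] at hJ
    exact hJ
  · intro h
    exact ⟨M c₀ n, model_outcome h⟩

end Undec

namespace Undec
open Turing.ToPartrec

lemma primrec_instFacts (c₀ : Code) : Primrec (fun n => instFacts c₀ n) := by
  have hnV : Primrec nV := Primrec.nat_mul.comp (Primrec.const 4) Primrec.id
  have hsingle : Primrec (fun n : ℕ => [n]) :=
    Primrec.list_cons.comp Primrec.id (Primrec.const [])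
  have hlVn : Primrec (fun n : ℕ => lV [n]) := by
    have henc : Primrec (fun n : ℕ => Encodable.encode ([n] : List ℕ)) :=
      Primrec.encode.comp hsingle
    exact Primrec.nat_add.comp (Primrec.nat_mul.comp (Primrec.const 4) henc) (Primrec.const 2)
  have hm1 : Primrec (fun n : ℕ => ((List.range (n+1)).map fun k => ((rNum, [nV k]) : RelName × List Val))) := by
    have hg : Primrec (fun k : ℕ => ((rNum, [nV k]) : RelName × List Val)) :=
      (Primrec.const rNum).pair (Primrec.list_cons.comp hnV (Primrec.const []))
    exact Primrec.list_map (Primrec.list_range.comp Primrec.succ) (hg.comp Primrec.snd).to₂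
  have hm2 : Primrec (fun n : ℕ => ((List.range n).map fun k => ((rS, [nV k, nV (k+1)]) : RelName × List Val))) := by
    have hg : Primrec (fun k : ℕ => ((rS, [nV k, nV (k+1)]) : RelName × List Val)) :=
      (Primrec.const rS).pair (Primrec.list_cons.comp hnV
        (Primrec.list_cons.comp (hnV.comp Primrec.succ) (Primrec.const [])))
    exact Primrec.list_map Primrec.list_range (hg.comp Primrec.snd).to₂
  have hinp : Primrec inputFacts := by
    unfold inputFacts
    refine Primrec.list_cons.comp (Primrec.const _) ?_
    refine Primrec.list_cons.comp (Primrec.const _) ?_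
    refine Primrec.list_cons.comp (Primrec.const _) ?_
    refine Primrec.list_cons.comp ((Primrec.const rList).pair
      (Primrec.list_cons.comp hlVn (Primrec.const []))) ?_
    refine Primrec.list_cons.comp ((Primrec.const rCons).pair
      (Primrec.list_cons.comp hlVn (Primrec.list_cons.comp hnV (Primrec.const [lV []])))) ?_
    refine Primrec.list_cons.comp ((Primrec.const rInput).pair
      (Primrec.list_cons.comp hlVn (Primrec.const []))) ?_
    exact Primrec.list_append.comp hm1 hm2
  unfold instFacts
  exact Primrec.list_cons.comp (Primrec.const _)
    (Primrec.list_append.comp (Primrec.const _) hinp)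

lemma cpComp {α β} [Primcodable α] [Primcodable β] {p : β → Prop} {f : α → β}
    (hp : ComputablePred p) (hf : Computable f) : ComputablePred fun a => p (f a) := by
  obtain ⟨g, hg, rfl⟩ := ComputablePred.computable_iff.1 hp
  exact ComputablePred.computable_iff.2 ⟨fun a => g (f a), hg.comp hf, rfl⟩

end Undec


/-- Nonemptiness of outcomes is undecidable: there is a fixed procedure `P`
with no preconditions and only tgd postconditions such that no algorithm
decides, given a finite instance `I`, whether `outcomes_P(I)` is nonempty. -/
theorem nonemptiness_undecidable :
    ∃ P : Proc, P.pre = [] ∧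
      ¬ ComputablePred (fun L : FinInst => (procOutcomes P (toInstance L)).Nonempty) := by

  classical
  refine ⟨Undec.Proc0, rfl, ?_⟩
  intro hP
  -- a universal partial function
  set g : ℕ →. ℕ := fun n => Nat.Partrec.Code.eval (Denumerable.ofNat Nat.Partrec.Code n) 0
    with hgdef
  have hgP : Partrec g :=
    Nat.Partrec.Code.eval_part.comp (Computable.ofNat _) (Computable.const 0)
  obtain ⟨c₀, hc₀⟩ := Turing.ToPartrec.Code.exists_code (Nat.Partrec'.part_iff₁.2 hgP)
  have hdom : ∀ n : ℕ, (c₀.eval [n]).Dom ↔ (g n).Dom := by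
    intro n
    have h := hc₀ ⟨[n], rfl⟩
    rw [h]
    exact Iff.rfl
  have h1 : ComputablePred
      (fun n : ℕ => (procOutcomes Undec.Proc0 (toInstance (Undec.instFacts c₀ n))).Nonempty) :=
    Undec.cpComp (p := fun L : FinInst => (procOutcomes Undec.Proc0 (toInstance L)).Nonempty)
      (f := fun n => Undec.instFacts c₀ n) hP (Undec.primrec_instFacts c₀).to_comp
  have h2 : ComputablePred (fun n : ℕ => ¬ (g n).Dom) := by
    have he : (fun n : ℕ =>
        (procOutcomes Undec.Proc0 (toInstance (Undec.instFacts c₀ n))).Nonempty)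
        = fun n : ℕ => ¬ (g n).Dom :=
      funext fun n => propext (Undec.outcome_nonempty_iff.trans (not_congr (hdom n)))
    rwa [he] at h1
  have h3 : ComputablePred (fun n : ℕ => (g n).Dom) := by
    have := h2.not
    simpa [not_not] using this
  apply ComputablePred.halting_problem 0
  have h4 := Undec.cpComp (p := fun n : ℕ => (g n).Dom)
    (f := fun c : Nat.Partrec.Code => Encodable.encode c) h3
    (Computable.encode (α := Nat.Partrec.Code))
  simpa [hgdef, Denumerable.ofNat_encode] using h4
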